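/- arXiv:1504.01899 — 3 statements merged into one kernel-verified Lean document; each statement's English description precedes it below -/
import Mathlib

section
/- Let Γ_{i,j} (for 1 ≤ i ≤ N and integer j ≥ 2−N) be defined by the initialization Γ_{i,2−j} = M_{i,j} for 1 ≤ j ≤ N, and by the recursion Γ_{i,j} = Σ_{k=1}^{N} (−1)^{k−1} ρ_k Γ_{i,j−k} for j ≥ 2. Then for every natural number n ≥ 1 and all indices 1 ≤ i, j ≤ N, the (i,j)-entry of M^n equals Γ_{i, n−(j−1)}. -/
/-- The normal-form matrix `M` of an `N`-dimensional piecewise linear continuous map: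
`M k 0 = (-1)^k * ρ k` (0-based), superdiagonal entries equal to 1, all other entries 0.
Given sequences `Γ i` initialized from the rows of `M` (in reverse order) and propagated
by the recursion `Γ i j = ∑ k, (-1)^k * ρ k * Γ i (j - (k+1))` for `j ≥ 2`, the entries of
`M^n` are `(M^n) i j = Γ i (n - j)` for all `n ≥ 1`. -/
theorem powers_of_normal_form_matrix
    (N : ℕ) (hN : 1 ≤ N) (ρ : Fin N → ℝ)
    (M : Matrix (Fin N) (Fin N) ℝ)
    (hM : ∀ i j : Fin N, M i j =
      if (j : ℕ) = 0 then (-1 : ℝ) ^ (i : ℕ) * ρ i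
      else if (j : ℕ) = (i : ℕ) + 1 then 1 else 0)
    (Γ : Fin N → ℤ → ℝ)
    (hΓinit : ∀ i j : Fin N, Γ i (1 - (j : ℤ)) = M i j)
    (hΓrec : ∀ i : Fin N, ∀ j : ℤ, 2 ≤ j →
      Γ i j = ∑ k : Fin N, (-1 : ℝ) ^ (k : ℕ) * ρ k * Γ i (j - ((k : ℤ) + 1))) :
    ∀ n : ℕ, 1 ≤ n → ∀ i j : Fin N, (M ^ n) i j = Γ i ((n : ℤ) - (j : ℤ)) := by
  intro n hn
  induction n, hn using Nat.le_induction with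
  | base =>
    intro i j
    rw [pow_one]
    rw [← hΓinit i j]
    norm_num
  | succ m hm ih =>
    intro i j
    rw [pow_succ, Matrix.mul_apply]
    by_cases hj : (j : ℕ) = 0
    · have hjz : (j : ℤ) = 0 := by exact_mod_cast hj
      have h2 : (2 : ℤ) ≤ ((m + 1 : ℕ) : ℤ) := by exact_mod_cast Nat.succ_le_succ hm
      rw [hjz, sub_zero, hΓrec i _ h2]
      refine Finset.sum_congr rfl fun k _ => ?_
      rw [ih i k, hM k j, if_pos hj]
      have : ((m + 1 : ℕ) : ℤ) - ((k : ℤ) + 1) = (m : ℤ) - (k : ℤ) := by push_cast; ring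
      rw [this]
      ring
    · have hjlt := j.isLt
      set k0 : Fin N := ⟨(j : ℕ) - 1, by omega⟩ with hk0
      rw [Finset.sum_eq_single k0]
      · rw [ih i k0, hM k0 j]
        have hk0v : (k0 : ℕ) = (j : ℕ) - 1 := rfl
        rw [if_neg hj, if_pos (by omega)]
        have : (m : ℤ) - (k0 : ℤ) = ((m + 1 : ℕ) : ℤ) - (j : ℤ) := by
          have h1 : ((k0 : ℕ) : ℤ) = (j : ℤ) - 1 := by
            rw [hk0v]; push_cast [Nat.one_le_iff_ne_zero.mpr hj]; ring
          rw [h1]; push_cast; ring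
        rw [this, mul_one]
      · intro k _ hk
        rw [hM k j, if_neg hj, if_neg, mul_zero]
        intro hcontra
        apply hk
        apply Fin.ext
        have hk0v : (k0 : ℕ) = (j : ℕ) - 1 := rfl
        omega
      · intro h
        exact absurd (Finset.mem_univ k0) h
end

section
/- For every natural number n ≥ 1, the (1,1)-entry of M^n equals Σ_{m=0}^{⌊n/2⌋} (−1)^m · C(n−m, m) · δ^m · τ^{n−2m}, where C denotes the binomial coefficient and ⌊·⌋ the floor function. -/
open Finset

/-- auxiliary recursive sequence -/
noncomputable def fSeq (τ δ : ℝ) : ℕ → ℝ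
  | 0 => 1
  | 1 => τ
  | (n+2) => τ * fSeq τ δ (n+1) - δ * fSeq τ δ n

/-- the summand -/
noncomputable def sTerm (τ δ : ℝ) (n m : ℕ) : ℝ :=
  (-1 : ℝ) ^ m * (Nat.choose (n - m) m : ℝ) * δ ^ m * τ ^ (n - 2 * m)

lemma sum_extend (τ δ : ℝ) (n : ℕ) :
    (∑ m ∈ Finset.range (n / 2 + 1), sTerm τ δ n m)
      = ∑ m ∈ Finset.range (n + 1), sTerm τ δ n m := by
  apply Finset.sum_subset
  · exact Finset.range_subset_range.2 (by omega)
  · intro m hm hm'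
    simp only [Finset.mem_range] at hm hm'
    have h : n - m < m := by omega
    simp [sTerm, Nat.choose_eq_zero_of_lt h]

lemma sum_rec (τ δ : ℝ) (n : ℕ) :
    (∑ m ∈ Finset.range (n + 3), sTerm τ δ (n+2) m)
      = τ * (∑ m ∈ Finset.range (n + 2), sTerm τ δ (n+1) m)
        - δ * (∑ m ∈ Finset.range (n + 1), sTerm τ δ n m) := by
  rw [Finset.sum_range_succ']
  have hsplit : ∀ m ∈ Finset.range (n + 2), sTerm τ δ (n+2) (m+1)
      = ((-1:ℝ)^(m+1) * (Nat.choose (n - m) (m+1) : ℝ) * δ^(m+1) * τ^(n - 2*m))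
        + (-δ) * sTerm τ δ n m := by
    intro m hm
    simp only [Finset.mem_range] at hm
    have h1 : n + 2 - (m+1) = (n - m) + 1 ∨ (m = n + 1) := by omega
    have hexp : n + 2 - 2*(m+1) = n - 2*m := by omega
    rcases h1 with h1 | rfl
    · rw [sTerm, sTerm, h1, Nat.choose_succ_succ, hexp]
      push_cast
      ring
    · have h2 : n + 2 - (n + 1 + 1) = 0 := by omega
      have h3 : n - (n+1) = 0 := by omega
      rw [sTerm, sTerm, h2, h3, hexp, Nat.choose_eq_zero_of_lt (by omega),
        Nat.choose_eq_zero_of_lt (by omega)]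
      push_cast
      ring
  rw [Finset.sum_congr rfl hsplit, Finset.sum_add_distrib]
  -- second part
  have hB : (∑ m ∈ Finset.range (n + 2), (-δ) * sTerm τ δ n m)
      = - δ * (∑ m ∈ Finset.range (n + 1), sTerm τ δ n m) := by
    rw [Finset.sum_range_succ]
    have : sTerm τ δ n (n+1) = 0 := by
      have : n - (n+1) < n + 1 := by omega
      simp [sTerm, Nat.choose_eq_zero_of_lt this]
    rw [this, ← Finset.mul_sum]
    ring
  -- first part equals τ * S(n+1) minus its first term
  have hA : (∑ m ∈ Finset.range (n + 2),
        (-1:ℝ)^(m+1) * (Nat.choose (n - m) (m+1) : ℝ) * δ^(m+1) * τ^(n - 2*m))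
        + sTerm τ δ (n+2) 0
      = τ * (∑ m ∈ Finset.range (n + 2), sTerm τ δ (n+1) m) := by
    rw [Finset.mul_sum, Finset.sum_range_succ' (fun m => τ * sTerm τ δ (n+1) m)]
    have hlast : (∑ m ∈ Finset.range (n + 2),
        (-1:ℝ)^(m+1) * (Nat.choose (n - m) (m+1) : ℝ) * δ^(m+1) * τ^(n - 2*m))
      = ∑ m ∈ Finset.range (n + 1),
        (-1:ℝ)^(m+1) * (Nat.choose (n - m) (m+1) : ℝ) * δ^(m+1) * τ^(n - 2*m) := by
      rw [Finset.sum_range_succ]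
      have h0 : n - (n+1) = 0 := by omega
      rw [h0, Nat.choose_eq_zero_of_lt (by omega)]
      push_cast; ring
    rw [hlast]
    have hcongr : ∀ m ∈ Finset.range (n + 1),
        (-1:ℝ)^(m+1) * (Nat.choose (n - m) (m+1) : ℝ) * δ^(m+1) * τ^(n - 2*m)
        = τ * sTerm τ δ (n+1) (m+1) := by
      intro m hm
      simp only [Finset.mem_range] at hm
      rw [sTerm]
      have hch : n + 1 - (m + 1) = n - m := by omega
      rw [hch]
      by_cases hc : 2 * m + 1 ≤ n
      · have hexp : n + 1 - 2*(m+1) = n - 2*m - 1 := by omega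
        have hτ : τ ^ (n - 2*m) = τ ^ (n - 2*m - 1) * τ := by
          rw [← pow_succ]; congr 1; omega
        rw [hexp, hτ]
        ring
      · have : n - m < m + 1 := by omega
        rw [Nat.choose_eq_zero_of_lt this]
        push_cast; ring
    rw [Finset.sum_congr rfl hcongr]
    have h0 : τ * sTerm τ δ (n+1) 0 = sTerm τ δ (n+2) 0 := by
      simp [sTerm, pow_succ]; ring
    rw [h0]
  rw [hB]
  linarith [hA]

lemma fSeq_eq_sum (τ δ : ℝ) : ∀ n : ℕ,
    fSeq τ δ n = ∑ m ∈ Finset.range (n / 2 + 1), sTerm τ δ n m ∧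
    fSeq τ δ (n+1) = ∑ m ∈ Finset.range ((n+1) / 2 + 1), sTerm τ δ (n+1) m := by
  intro n
  induction n with
  | zero =>
    constructor
    · simp [fSeq, sTerm]
    · simp [fSeq, sTerm]
  | succ k ih =>
    refine ⟨ih.2, ?_⟩
    rw [sum_extend]
    show fSeq τ δ (k+2) = _
    rw [show k + 1 + 1 + 1 = k + 3 from rfl, sum_rec]
    rw [fSeq]
    rw [ih.1, ih.2, sum_extend, sum_extend]

lemma pow_entries (τ δ : ℝ) : ∀ n : ℕ,
    ((!![τ, 1; -δ, 0] : Matrix (Fin 2) (Fin 2) ℝ) ^ (n+1)) 0 0 = fSeq τ δ (n+1) ∧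
    ((!![τ, 1; -δ, 0] : Matrix (Fin 2) (Fin 2) ℝ) ^ (n+1)) 0 1 = fSeq τ δ n := by
  intro n
  induction n with
  | zero => constructor <;> simp [fSeq]
  | succ k ih =>
    rw [pow_succ]
    constructor
    · simp only [Matrix.mul_apply, Fin.sum_univ_two, ih.1, ih.2]
      show _ = fSeq τ δ (k+2)
      rw [fSeq]
      simp [Matrix.cons_val_zero, Matrix.cons_val_one]
      ring
    · simp only [Matrix.mul_apply, Fin.sum_univ_two, ih.1, ih.2]
      simp [Matrix.cons_val_zero, Matrix.cons_val_one]

/-- For the 2×2 normal-form matrix `M = !![τ,1; -δ,0]` and every `n ≥ 1`, the `(1,1)`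
entry of `M^n` equals `∑_{m=0}^{⌊n/2⌋} (-1)^m C(n-m, m) δ^m τ^(n-2m)`. -/
theorem two_dim_matrix_power_top_left_entry
    (τ δ : ℝ)
    (M : Matrix (Fin 2) (Fin 2) ℝ)
    (hM : M = !![τ, 1; -δ, 0]) :
    ∀ n : ℕ, 1 ≤ n → (M ^ n) 0 0 = ∑ m ∈ Finset.range (n / 2 + 1),
      (-1 : ℝ) ^ m * (Nat.choose (n - m) m : ℝ) * δ ^ m * τ ^ (n - 2 * m) := by
  intro n hn
  obtain ⟨k, rfl⟩ : ∃ k, n = k + 1 := ⟨n - 1, by omega⟩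
  rw [hM, (pow_entries τ δ k).1, (fSeq_eq_sum τ δ (k+1)).1]
  rfl
end

section
/- Assume 1 − τ + δ ≠ 0 and define f_n = (1 − a_n + δ a_{n−1}) / (1 − τ + δ) for integers n ≥ 0. Then for every integer n ≥ 2, the geometric sum φ_n = I + M + M^2 + ⋯ + M^{n−1} (i.e., Σ_{k=0}^{n−1} M^k) equals the 2×2 matrix with rows (f_n, f_{n−1}) and (−δ f_{n−1}, 1 − δ f_{n−2}). -/
/-- For `M = !![τ,1; -δ,0]`, the sequence `a` with `a (-1) = 0`, `a 0 = 1`,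
`a n = τ a (n-1) - δ a (n-2)` for `n ≥ 1`, and (assuming `1 - τ + δ ≠ 0`)
`f n = (1 - a n + δ a (n-1)) / (1 - τ + δ)` for `n ≥ 0`, the geometric sum
`φ_n = ∑_{k=0}^{n-1} M^k` equals `!![f n, f (n-1); -δ f (n-1), 1 - δ f (n-2)]`
for every `n ≥ 2`. -/
theorem two_dim_geometric_sum_form
    (τ δ : ℝ) (hden : 1 - τ + δ ≠ 0)
    (M : Matrix (Fin 2) (Fin 2) ℝ)
    (hM : M = !![τ, 1; -δ, 0])
    (a : ℤ → ℝ)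
    (ham : a (-1) = 0) (ha0 : a 0 = 1)
    (harec : ∀ n : ℤ, 1 ≤ n → a n = τ * a (n - 1) - δ * a (n - 2))
    (f : ℤ → ℝ)
    (hf : ∀ n : ℤ, 0 ≤ n → f n = (1 - a n + δ * a (n - 1)) / (1 - τ + δ)) :
    ∀ n : ℕ, 2 ≤ n →
      ∑ k ∈ Finset.range n, M ^ k =
        !![f n, f ((n : ℤ) - 1); -δ * f ((n : ℤ) - 1), 1 - δ * f ((n : ℤ) - 2)] := by
  have ha1 : a 1 = τ := by
    have h := harec 1 le_rfl
    norm_num [ha0, ham] at h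
    exact h
  have ha2 : a 2 = τ * τ - δ := by
    have h := harec 2 (by norm_num)
    norm_num [ha1, ha0] at h
    linarith
  have hf0 : f 0 = 0 := by
    rw [hf 0 le_rfl]
    norm_num [ha0, ham]
  have hf1 : f 1 = 1 := by
    rw [hf 1 (by norm_num)]
    norm_num [ha1, ha0]
    field_simp
    exact hden
  have hf2 : f 2 = 1 + τ := by
    rw [hf 2 (by norm_num)]
    norm_num [ha2, ha1]
    field_simp
    ring
  have hfrec : ∀ m : ℤ, 2 ≤ m → f m = τ * f (m - 1) - δ * f (m - 2) + 1 := by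
    intro m hm
    have h1 := harec m (by linarith)
    have h2 := harec (m - 1) (by linarith)
    rw [show m - 1 - 1 = m - 2 by ring, show m - 1 - 2 = m - 3 by ring] at h2
    rw [hf m (by linarith), hf (m - 1) (by linarith), hf (m - 2) (by linarith)]
    rw [show m - 1 - 1 = m - 2 by ring, show m - 2 - 1 = m - 3 by ring]
    field_simp
    rw [h1, h2]
    ring
  intro n hn
  induction n, hn using Nat.le_induction with
  | base =>
    rw [hM]
    norm_num [Finset.sum_range_succ, hf2, hf1, hf0]
    ext i j
    fin_cases i <;> fin_cases j <;>
      simp [Matrix.one_apply]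
  | succ n hn ih =>
    rw [Finset.sum_range_succ']
    have hc : ((n : ℤ) + 1 : ℤ) = ((n + 1 : ℕ) : ℤ) := by push_cast; ring
    have hn2 : (2 : ℤ) ≤ (n : ℤ) := by exact_mod_cast hn
    have key1 : f ((n : ℤ) + 1) = τ * f n - δ * f ((n : ℤ) - 1) + 1 := by
      have := hfrec ((n : ℤ) + 1) (by linarith)
      rwa [show (n : ℤ) + 1 - 1 = (n : ℤ) by ring,
        show (n : ℤ) + 1 - 2 = (n : ℤ) - 1 by ring] at this
    have key2 : f (n : ℤ) = τ * f ((n : ℤ) - 1) - δ * f ((n : ℤ) - 2) + 1 :=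
      hfrec _ hn2
    have key1' : f (1 + (n : ℤ)) = τ * f (n : ℤ) - δ * f (-1 + (n : ℤ)) + 1 := by
      rw [show (1 + (n : ℤ)) = (n : ℤ) + 1 by ring,
        show (-1 + (n : ℤ)) = (n : ℤ) - 1 by ring]
      exact key1
    have key2' : f (n : ℤ) = τ * f (-1 + (n : ℤ)) - δ * f (-2 + (n : ℤ)) + 1 := by
      rw [show (-1 + (n : ℤ)) = (n : ℤ) - 1 by ring,
        show (-2 + (n : ℤ)) = (n : ℤ) - 2 by ring]
      exact key2
    have hsum : (∑ k ∈ Finset.range n, M ^ (k + 1)) =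
        M * ∑ k ∈ Finset.range n, M ^ k := by
      rw [Finset.mul_sum]
      exact Finset.sum_congr rfl fun k _ => pow_succ' M k
    rw [hsum, ih, hM]
    push_cast
    rw [show ((n : ℤ) + 1 - 1) = (n : ℤ) by ring,
      show ((n : ℤ) + 1 - 2) = (n : ℤ) - 1 by ring]
    ext i j
    fin_cases i <;> fin_cases j <;>
      simp [Matrix.mul_fin_two, Matrix.one_apply]
    · linarith [key1']
    · linarith [key2']
    · ring
end
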